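/- arXiv:0707.0994 — 5 statements merged into one kernel-verified Lean document; each statement's English description precedes it below -/
import Mathlib

section
/- Suppose the topology of E is generated by an increasing sequence of seminorms (p_n)_{n∈ℕ}. Then for every net (A_ε)_{ε∈(0,1)} of subsets of E, the internal set [(A_ε)] admits the alternative description [(A_ε)] = {u ∈ G_E : for every n ∈ ℕ the net (d_n(u_ε, A_ε))_ε is negligible}, where (u_ε) is any representative of u; in particular, whether (d_n(u_ε, A_ε))_ε is negligible for all n does not depend on the choice of representative (u_ε) of u. -/
open Filter Topology Asymptotics

noncomputable section

namespace ColombeauPaper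

variable {ι κ : Type*} {E : Type*} [AddCommGroup E] [Module ℝ E]
  {F : Type*} [AddCommGroup F] [Module ℝ F]

/-- A net `(u_ε)` in `E` is moderate for the family of seminorms `p` if for every `i`
there is `M ∈ ℕ` with `p i (u_ε) ≤ ε ^ (-M)` for all sufficiently small `ε > 0`. -/
def IsModerate (p : ι → Seminorm ℝ E) (u : ℝ → E) : Prop :=
  ∀ i, ∃ M : ℕ, ∀ᶠ ε in 𝓝[>] (0 : ℝ), p i (u ε) ≤ ε ^ (-(M : ℤ))

/-- A net `(u_ε)` in `E` is negligible if for every `i` and every `m ∈ ℕ` one has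
`p i (u_ε) ≤ ε ^ m` for all sufficiently small `ε > 0`. -/
def IsNegligible (p : ι → Seminorm ℝ E) (u : ℝ → E) : Prop :=
  ∀ i, ∀ m : ℕ, ∀ᶠ ε in 𝓝[>] (0 : ℝ), p i (u ε) ≤ ε ^ m

/-- A negligible net of real numbers. -/
def IsNegligibleR (n : ℝ → ℝ) : Prop :=
  ∀ m : ℕ, ∀ᶠ ε in 𝓝[>] (0 : ℝ), |n ε| ≤ ε ^ m

lemma small_mem : {ε : ℝ | 0 < ε ∧ ε ≤ 1 / 2} ∈ 𝓝[>] (0 : ℝ) := by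
  have h : Set.Ioo (0 : ℝ) (1 / 2) ∈ 𝓝[>] (0 : ℝ) :=
    Ioo_mem_nhdsGT_of_mem ⟨le_refl 0, by norm_num⟩
  filter_upwards [h] with ε hε
  exact ⟨hε.1, hε.2.le⟩

lemma zpow_neg_natCast_eq {ε : ℝ} (k : ℕ) : ε ^ (-(k : ℤ)) = ε⁻¹ ^ (k : ℤ) := by
  rw [zpow_neg, inv_zpow]

/-- The moderate nets form an additive subgroup of `(0,1) → E` (here modelled on `ℝ → E`,
with all conditions holding for sufficiently small `ε > 0`). -/
def moderateGroup (p : ι → Seminorm ℝ E) : AddSubgroup (ℝ → E) where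
  carrier := {u | IsModerate p u}
  zero_mem' := by
    intro i
    refine ⟨0, ?_⟩
    filter_upwards [self_mem_nhdsWithin] with ε hε
    have hε' : (0 : ℝ) < ε := hε
    simp only [Pi.zero_apply, map_zero]
    positivity
  add_mem' := by
    intro u v hu hv i
    obtain ⟨M, hM⟩ := hu i
    obtain ⟨N, hN⟩ := hv i
    refine ⟨max M N + 1, ?_⟩
    filter_upwards [hM, hN, small_mem] with ε h1 h2 h3
    obtain ⟨hε, hε2⟩ := h3
    have hinv : (1 : ℝ) ≤ ε⁻¹ := (one_le_inv₀ hε).2 (by linarith)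
    have h2inv : (2 : ℝ) ≤ ε⁻¹ := by
      nlinarith [mul_inv_cancel₀ (ne_of_gt hε)]
    have key : ∀ k l : ℕ, k ≤ l → ε ^ (-(k : ℤ)) ≤ ε ^ (-(l : ℤ)) := by
      intro k l hkl
      rw [zpow_neg_natCast_eq, zpow_neg_natCast_eq]
      exact zpow_le_zpow_right₀ hinv (by exact_mod_cast hkl)
    set K : ℕ := max M N with hK
    have h1' : p i (u ε) ≤ ε ^ (-(K : ℤ)) := h1.trans (key M K (le_max_left _ _))
    have h2' : p i (v ε) ≤ ε ^ (-(K : ℤ)) := h2.trans (key N K (le_max_right _ _))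
    have tri : p i ((u + v) ε) ≤ p i (u ε) + p i (v ε) := by
      simpa using map_add_le_add (p i) (u ε) (v ε)
    have efin : ε ^ (-(K : ℤ)) * 2 ≤ ε ^ (-((K + 1 : ℕ) : ℤ)) := by
      rw [zpow_neg_natCast_eq, zpow_neg_natCast_eq]
      push_cast
      have hnn : (0:ℝ) ≤ ε⁻¹ ^ (K : ℤ) := by positivity
      calc ε⁻¹ ^ (K : ℤ) * 2 ≤ ε⁻¹ ^ (K : ℤ) * ε⁻¹ :=
            mul_le_mul_of_nonneg_left h2inv hnn
        _ = ε⁻¹ ^ ((K : ℤ) + 1) := by rw [zpow_add₀ (by positivity : (ε⁻¹ : ℝ) ≠ 0), zpow_one]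
    push_cast at efin ⊢
    linarith
  neg_mem' := by
    intro u hu i
    obtain ⟨M, hM⟩ := hu i
    refine ⟨M, ?_⟩
    filter_upwards [hM] with ε h
    simpa [map_neg_eq_map] using h

/-- The negligible nets form an additive subgroup of the moderate ones. -/
def negligibleGroup (p : ι → Seminorm ℝ E) : AddSubgroup (moderateGroup p) where
  carrier := {u | IsNegligible p (u : ℝ → E)}
  zero_mem' := by
    intro i m
    filter_upwards [self_mem_nhdsWithin] with ε hε
    have hε' : (0 : ℝ) < ε := hε
    simp only [AddSubgroup.coe_zero, Pi.zero_apply, map_zero]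
    positivity
  add_mem' := by
    intro u v hu hv i m
    filter_upwards [hu i (m + 1), hv i (m + 1), small_mem] with ε h1 h2 h3
    obtain ⟨hε, hε2⟩ := h3
    have tri : p i (((u + v : moderateGroup p) : ℝ → E) ε)
        ≤ p i ((u : ℝ → E) ε) + p i ((v : ℝ → E) ε) := by
      simpa using map_add_le_add (p i) ((u : ℝ → E) ε) ((v : ℝ → E) ε)
    have hpow : ε ^ (m + 1) = ε ^ m * ε := pow_succ ε m
    nlinarith [pow_nonneg hε.le m]
  neg_mem' := by
    intro u hu i m
    filter_upwards [hu i m] with ε h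
    have : ((-u : moderateGroup p) : ℝ → E) ε = -((u : ℝ → E) ε) := rfl
    rw [this, map_neg_eq_map]
    exact h

/-- The Colombeau space based on `E` (with the family of seminorms `p`):
the quotient of the moderate nets by the negligible ones. -/
abbrev Colombeau (p : ι → Seminorm ℝ E) : Type _ :=
  moderateGroup p ⧸ negligibleGroup p

/-- The internal subset of `𝒢_E` generated by a net `(A_ε)` of subsets of `E`:
all `u` having a representative `(u_ε)` with `u_ε ∈ A_ε` for sufficiently small `ε`. -/
def internalSet (p : ι → Seminorm ℝ E) (A : ℝ → Set E) : Set (Colombeau p) :=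
  {u | ∃ w : moderateGroup p, (QuotientAddGroup.mk w : Colombeau p) = u ∧
        ∀ᶠ ε in 𝓝[>] (0 : ℝ), (w : ℝ → E) ε ∈ A ε}

/-- A subset of `𝒢_E` is internal if it is generated by some net of subsets of `E`. -/
def IsInternal (p : ι → Seminorm ℝ E) (A : Set (Colombeau p)) : Prop :=
  ∃ Anet : ℝ → Set E, A = internalSet p Anet

/-- `d_i(u, A) = inf_{v ∈ A} p_i (u - v)`, with value `+∞` for `A = ∅`. -/
def semiDist (p : ι → Seminorm ℝ E) (i : ι) (u : E) (A : Set E) : EReal :=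
  ⨅ v ∈ A, ((p i (u - v) : ℝ) : EReal)

/-- A sharply bounded net of subsets of `E`. -/
def SharplyBoundedNet (p : ι → Seminorm ℝ E) (A : ℝ → Set E) : Prop :=
  ∀ i, ∃ M : ℕ, ∀ᶠ ε in 𝓝[>] (0 : ℝ), ∀ w ∈ A ε, p i w ≤ ε ^ (-(M : ℤ))

/-- `p_i(u) ≤ α ^ t` in `ℝ̃` (where `α` is the class of `(ε)_ε`): some representative of the
net of seminorms is bounded by `ε ^ t` up to a negligible net for small `ε`. -/
def seminormLeAlpha (p : ι → Seminorm ℝ E) (i : ι) (u : Colombeau p) (t : ℝ) : Prop :=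
  ∃ (w : moderateGroup p) (n : ℝ → ℝ), (QuotientAddGroup.mk w : Colombeau p) = u ∧
    IsNegligibleR n ∧ ∀ᶠ ε in 𝓝[>] (0 : ℝ), p i ((w : ℝ → E) ε) ≤ ε ^ t + n ε

/-- The ultra-pseudo-seminorm `u ↦ |p_i(u)|_s = e^{-ν(p_i(u))}` on `𝒢_E`, where
`ν(x) = sup {b : |x_ε| = O(ε^b)}` is the valuation. -/
def sharpSemi (p : ι → Seminorm ℝ E) (i : ι) (u : Colombeau p) : ℝ :=
  sInf {r : ℝ | ∃ (b : ℝ) (w : moderateGroup p), (QuotientAddGroup.mk w : Colombeau p) = u ∧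
    r = Real.exp (-b) ∧ (fun ε => (p i ((w : ℝ → E) ε) : ℝ)) =O[𝓝[>] (0 : ℝ)] fun ε => ε ^ b}

/-- The sharp topology on `𝒢_E`: the topology generated by the ultra-pseudo-seminorms
`u ↦ |p_i(u)|_s`, i.e. generated by all the corresponding balls. -/
def sharpTopology (p : ι → Seminorm ℝ E) : TopologicalSpace (Colombeau p) :=
  TopologicalSpace.generateFrom
    {B | ∃ (u : Colombeau p) (i : ι) (r : ℝ), 0 < r ∧
          B = {v | sharpSemi p i (v - u) < r}}

lemma indicator_norm_le_one (S : Set ℝ) (ε : ℝ) :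
    ‖S.indicator (fun _ => (1 : ℝ)) ε‖ ≤ 1 := by
  by_cases h : ε ∈ S <;>
    simp [Set.indicator_of_mem, Set.indicator_of_notMem, h]

lemma eAux_le (p : ι → Seminorm ℝ E) (S : Set ℝ) (i : ι) (ε : ℝ) (x : E) :
    p i (S.indicator (fun _ => (1 : ℝ)) ε • x) ≤ p i x := by
  rw [map_smul_eq_mul]
  calc ‖S.indicator (fun _ => (1 : ℝ)) ε‖ * p i x ≤ 1 * p i x :=
        mul_le_mul_of_nonneg_right (indicator_norm_le_one S ε) (apply_nonneg _ _)
    _ = p i x := one_mul _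

/-- Multiplication by the characteristic function `χ_S`, on representatives. -/
def eAux (p : ι → Seminorm ℝ E) (S : Set ℝ) : moderateGroup p →+ moderateGroup p where
  toFun u := ⟨fun ε => S.indicator (fun _ => (1 : ℝ)) ε • (u : ℝ → E) ε, by
    have hu : IsModerate p (u : ℝ → E) := u.2
    intro i
    obtain ⟨M, hM⟩ := hu i
    refine ⟨M, ?_⟩
    filter_upwards [hM] with ε hε
    exact (eAux_le p S i ε _).trans hε⟩
  map_zero' := by
    apply Subtype.ext
    funext ε
    simp
  map_add' u v := by
    apply Subtype.ext
    funext ε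
    simp [smul_add]

/-- Multiplication by `e_S`, the class of the characteristic function of `S ⊆ (0,1)`,
as a map `𝒢_E → 𝒢_E`. -/
def eMul (p : ι → Seminorm ℝ E) (S : Set ℝ) : Colombeau p →+ Colombeau p :=
  QuotientAddGroup.map _ _ (eAux p S) (by
    intro u hu
    rw [AddSubgroup.mem_comap]
    have hu' : IsNegligible p (u : ℝ → E) := hu
    show IsNegligible p _
    intro i m
    filter_upwards [hu' i m] with ε hε
    exact (eAux_le p S i ε _).trans hε)

/-- The set of finite interleavings `∑_{j=1}^m e_{S_j} a_j` of elements of `A`,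
over partitions `{S_1, …, S_m}` of `(0,1)`. -/
def interleaving (p : ι → Seminorm ℝ E) (A : Set (Colombeau p)) : Set (Colombeau p) :=
  {u | ∃ (m : ℕ) (S : Fin m → Set ℝ) (a : Fin m → Colombeau p),
        (∀ j, a j ∈ A) ∧ (∀ j, S j ⊆ Set.Ioo 0 1) ∧
        (Pairwise fun j k => Disjoint (S j) (S k)) ∧ (⋃ j, S j) = Set.Ioo 0 1 ∧
        u = ∑ j, eMul p (S j) (a j)}

/-- The family of seminorms `max (p_i, q_j)` generating the product topology on `E × F`. -/
def prodSeminorm (p : ι → Seminorm ℝ E) (q : κ → Seminorm ℝ F) :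
    ι × κ → Seminorm ℝ (E × F) :=
  fun ij => (p ij.1).comp (LinearMap.fst ℝ E F) ⊔ (q ij.2).comp (LinearMap.snd ℝ E F)

lemma prodSeminorm_apply (p : ι → Seminorm ℝ E) (q : κ → Seminorm ℝ F) (i : ι) (j : κ)
    (x : E × F) : prodSeminorm p q (i, j) x = max (p i x.1) (q j x.2) := by
  simp [prodSeminorm, Seminorm.sup_apply, Seminorm.comp_apply]

/-- First component of a moderate net in `E × F`, as a moderate net in `E`. -/
def prodFstAux [Nonempty κ] (p : ι → Seminorm ℝ E) (q : κ → Seminorm ℝ F) :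
    moderateGroup (prodSeminorm p q) →+ moderateGroup p where
  toFun w := ⟨fun ε => ((w : ℝ → E × F) ε).1, by
    have hw : IsModerate (prodSeminorm p q) (w : ℝ → E × F) := w.2
    intro i
    obtain ⟨j⟩ := ‹Nonempty κ›
    obtain ⟨M, hM⟩ := hw (i, j)
    refine ⟨M, ?_⟩
    filter_upwards [hM] with ε hε
    calc p i (((w : ℝ → E × F) ε).1) ≤ prodSeminorm p q (i, j) ((w : ℝ → E × F) ε) := by
          rw [prodSeminorm_apply]; exact le_max_left _ _
      _ ≤ ε ^ (-(M : ℤ)) := hε⟩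
  map_zero' := by apply Subtype.ext; funext ε; simp
  map_add' u v := by apply Subtype.ext; funext ε; simp

/-- Second component of a moderate net in `E × F`, as a moderate net in `F`. -/
def prodSndAux [Nonempty ι] (p : ι → Seminorm ℝ E) (q : κ → Seminorm ℝ F) :
    moderateGroup (prodSeminorm p q) →+ moderateGroup q where
  toFun w := ⟨fun ε => ((w : ℝ → E × F) ε).2, by
    have hw : IsModerate (prodSeminorm p q) (w : ℝ → E × F) := w.2
    intro j
    obtain ⟨i⟩ := ‹Nonempty ι›
    obtain ⟨M, hM⟩ := hw (i, j)
    refine ⟨M, ?_⟩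
    filter_upwards [hM] with ε hε
    calc q j (((w : ℝ → E × F) ε).2) ≤ prodSeminorm p q (i, j) ((w : ℝ → E × F) ε) := by
          rw [prodSeminorm_apply]; exact le_max_right _ _
      _ ≤ ε ^ (-(M : ℤ)) := hε⟩
  map_zero' := by apply Subtype.ext; funext ε; simp
  map_add' u v := by apply Subtype.ext; funext ε; simp

/-- The canonical identification `𝒢_{E × F} ≅ 𝒢_E × 𝒢_F` (given on representatives by
`[(u_ε, v_ε)] ↦ ([(u_ε)], [(v_ε)])`). -/
def prodIdent [Nonempty ι] [Nonempty κ] (p : ι → Seminorm ℝ E) (q : κ → Seminorm ℝ F) :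
    Colombeau (prodSeminorm p q) →+ Colombeau p × Colombeau q :=
  QuotientAddGroup.lift (negligibleGroup (prodSeminorm p q))
    (((QuotientAddGroup.mk' (negligibleGroup p)).comp (prodFstAux p q)).prod
      ((QuotientAddGroup.mk' (negligibleGroup q)).comp (prodSndAux p q)))
    (by
      intro w hw
      have hw' : IsNegligible (prodSeminorm p q) (w : ℝ → E × F) := hw
      rw [AddMonoidHom.mem_ker]
      refine Prod.ext ?_ ?_
      · show (QuotientAddGroup.mk' (negligibleGroup p)) (prodFstAux p q w) = 0
        rw [QuotientAddGroup.mk'_apply, QuotientAddGroup.eq_zero_iff]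
        show IsNegligible p _
        intro i m
        obtain ⟨j⟩ := ‹Nonempty κ›
        filter_upwards [hw' (i, j) m] with ε hε
        calc p i (((w : ℝ → E × F) ε).1)
            ≤ prodSeminorm p q (i, j) ((w : ℝ → E × F) ε) := by
              rw [prodSeminorm_apply]; exact le_max_left _ _
          _ ≤ ε ^ m := hε
      · show (QuotientAddGroup.mk' (negligibleGroup q)) (prodSndAux p q w) = 0
        rw [QuotientAddGroup.mk'_apply, QuotientAddGroup.eq_zero_iff]
        show IsNegligible q _
        intro j m
        obtain ⟨i⟩ := ‹Nonempty ι›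
        filter_upwards [hw' (i, j) m] with ε hε
        calc q j (((w : ℝ → E × F) ε).2)
            ≤ prodSeminorm p q (i, j) ((w : ℝ → E × F) ε) := by
              rw [prodSeminorm_apply]; exact le_max_right _ _
          _ ≤ ε ^ m := hε)

/-- A subset of `𝒢_E × 𝒢_F` is internal if, under the canonical identification
`𝒢_{E×F} ≅ 𝒢_E × 𝒢_F`, it corresponds to an internal subset of `𝒢_{E×F}`. -/
def IsInternalProd [Nonempty ι] [Nonempty κ] (p : ι → Seminorm ℝ E) (q : κ → Seminorm ℝ F)
    (C : Set (Colombeau p × Colombeau q)) : Prop :=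
  ∃ Cnet : ℝ → Set (E × F),
    C = prodIdent p q '' internalSet (prodSeminorm p q) Cnet

section Normed

variable (V : Type*) [NormedAddCommGroup V] [NormedSpace ℝ V]

/-- The norm of a normed space, as a one-element family of seminorms. -/
abbrev normFamily : Unit → Seminorm ℝ V := fun _ => normSeminorm ℝ V

/-- The Colombeau space based on a normed space `V`. -/
abbrev GN := Colombeau (normFamily V)

variable {V}

/-- `‖u‖ ≤ α ^ t` in `ℝ̃`, where `α` is the class of `(ε)_ε`. -/
def normLeAlpha (u : GN V) (t : ℝ) : Prop :=
  ∃ (w : moderateGroup (normFamily V)) (n : ℝ → ℝ),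
    (QuotientAddGroup.mk w : GN V) = u ∧ IsNegligibleR n ∧
    ∀ᶠ ε in 𝓝[>] (0 : ℝ), ‖(w : ℝ → V) ε‖ ≤ ε ^ t + n ε

/-- `‖u‖ ≤ ‖v‖` in `ℝ̃`. -/
def normLeNorm (u v : GN V) : Prop :=
  ∃ (a b : moderateGroup (normFamily V)) (n : ℝ → ℝ),
    (QuotientAddGroup.mk a : GN V) = u ∧ (QuotientAddGroup.mk b : GN V) = v ∧
    IsNegligibleR n ∧
    ∀ᶠ ε in 𝓝[>] (0 : ℝ), ‖(a : ℝ → V) ε‖ ≤ ‖(b : ℝ → V) ε‖ + n ε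

/-- A subset `A ⊆ 𝒢_V` is sharply bounded if `‖u‖ ≤ α^{-M}` for some `M ∈ ℕ` and all `u ∈ A`. -/
def SharplyBounded (A : Set (GN V)) : Prop :=
  ∃ M : ℕ, ∀ u ∈ A, normLeAlpha u (-(M : ℝ))

/-- A sharply bounded net of subsets of the normed space `V`. -/
def SharplyBoundedNetN (A : ℝ → Set V) : Prop :=
  ∃ M : ℕ, ∀ᶠ ε in 𝓝[>] (0 : ℝ), ∀ w ∈ A ε, ‖w‖ ≤ ε ^ (-(M : ℤ))

end Normed


section Statement0Aux

variable {E : Type*} [AddCommGroup E] [Module ℝ E]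

/-- Forward direction: if `u` is in the internal set, then every representative has
negligible distance nets. -/
lemma aux_forward (p : ℕ → Seminorm ℝ E) (A : ℝ → Set E)
    {u : Colombeau p} (hu : u ∈ internalSet p A)
    (w : moderateGroup p) (hw : (QuotientAddGroup.mk w : Colombeau p) = u)
    (n m : ℕ) :
    ∀ᶠ ε in 𝓝[>] (0 : ℝ), semiDist p n ((w : ℝ → E) ε) (A ε) ≤ ((ε ^ m : ℝ) : EReal) := by
  obtain ⟨w₀, hw₀, hmem⟩ := hu
  have hmk : (QuotientAddGroup.mk w₀ : Colombeau p) = QuotientAddGroup.mk w :=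
    hw₀.trans hw.symm
  have hneg : IsNegligible p ((-w₀ + w : moderateGroup p) : ℝ → E) :=
    QuotientAddGroup.eq.mp hmk
  filter_upwards [hneg n m, hmem] with ε h1 h2
  have he : ((-w₀ + w : moderateGroup p) : ℝ → E) ε
      = (w : ℝ → E) ε - (w₀ : ℝ → E) ε := by
    simp [neg_add_eq_sub]
  rw [he] at h1
  calc semiDist p n ((w : ℝ → E) ε) (A ε)
      ≤ ((p n ((w : ℝ → E) ε - (w₀ : ℝ → E) ε) : ℝ) : EReal) := by
        exact iInf₂_le ((w₀ : ℝ → E) ε) h2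
    _ ≤ ((ε ^ m : ℝ) : EReal) := by exact_mod_cast h1

/-- Backward direction: if some representative `w` of `u` has negligible distance nets,
then `u` lies in the internal set. -/
lemma aux_backward (p : ℕ → Seminorm ℝ E) (hp : Monotone p) (A : ℝ → Set E)
    (w : moderateGroup p)
    (hdist : ∀ n m : ℕ, ∀ᶠ ε in 𝓝[>] (0 : ℝ),
      semiDist p n ((w : ℝ → E) ε) (A ε) ≤ ((ε ^ m : ℝ) : EReal)) :
    (QuotientAddGroup.mk w : Colombeau p) ∈ internalSet p A := by
  classical
  have H : ∀ k : ℕ, ∃ η : ℝ, 0 < η ∧ ∀ ε : ℝ, 0 < ε → ε < η →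
      semiDist p k ((w : ℝ → E) ε) (A ε) ≤ ((ε ^ k : ℝ) : EReal) := by
    intro k
    obtain ⟨t, ht, hsub⟩ := mem_nhdsGT_iff_exists_Ioo_subset.mp (hdist k k)
    exact ⟨t, ht, fun ε h1 h2 => hsub ⟨h1, h2⟩⟩
  choose η ηpos hQ using H
  -- a decreasing version of `η` tending to `0`
  set η' : ℕ → ℝ :=
    fun k => Nat.rec (min (η 0) 1) (fun k ih => min (η (k + 1)) (ih / 2)) k with hη'
  have η'zero : η' 0 = min (η 0) 1 := rfl
  have η'succ : ∀ k, η' (k + 1) = min (η (k + 1)) (η' k / 2) := fun _ => rfl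
  have η'pos : ∀ k, 0 < η' k := by
    intro k
    induction k with
    | zero => rw [η'zero]; exact lt_min (ηpos 0) one_pos
    | succ k ih => rw [η'succ]; exact lt_min (ηpos _) (by linarith)
  have η'le : ∀ k, η' k ≤ η k := by
    intro k
    cases k with
    | zero => rw [η'zero]; exact min_le_left _ _
    | succ k => rw [η'succ]; exact min_le_left _ _
  have η'anti : Antitone η' := by
    apply antitone_nat_of_succ_le
    intro k
    rw [η'succ]
    have := η'pos k
    exact (min_le_right _ _).trans (by linarith)
  have η'small : ∀ k, η' k ≤ η' 0 / 2 ^ k := by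
    intro k
    induction k with
    | zero => simp
    | succ k ih =>
      rw [η'succ, pow_succ, ← div_div]
      exact (min_le_right _ _).trans (by linarith)
  have hex : ∀ ε : ℝ, 0 < ε → ∃ k, η' k ≤ ε := by
    intro ε hε
    obtain ⟨k, hk⟩ := pow_unbounded_of_one_lt (η' 0 / ε) (one_lt_two : (1 : ℝ) < 2)
    refine ⟨k, (η'small k).trans ?_⟩
    rw [div_le_iff₀ (by positivity : (0 : ℝ) < 2 ^ k)]
    have h2 : η' 0 < 2 ^ k * ε := (div_lt_iff₀ hε).mp hk
    nlinarith
  -- choose good approximants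
  have key : ∀ ε : ℝ, (h : 0 < ε ∧ ε < η' 0) → ∃ v ∈ A ε,
      p (Nat.find (hex ε h.1) - 1) ((w : ℝ → E) ε - v)
        ≤ 2 * ε ^ (Nat.find (hex ε h.1) - 1) := by
    intro ε h
    have hK1 : 1 ≤ Nat.find (hex ε h.1) := by
      rw [Nat.one_le_iff_ne_zero]
      intro h0
      have hs := Nat.find_spec (hex ε h.1)
      rw [h0] at hs
      linarith [h.2]
    set L := Nat.find (hex ε h.1) - 1 with hL
    have hLK : L < Nat.find (hex ε h.1) := Nat.sub_lt hK1 one_pos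
    have hεL : ε < η' L := lt_of_not_ge (Nat.find_min (hex ε h.1) hLK)
    have hQL := hQ L ε h.1 (hεL.trans_le (η'le L))
    have hpow : (0 : ℝ) < ε ^ L := pow_pos h.1 L
    have hlt : semiDist p L ((w : ℝ → E) ε) (A ε) < ((2 * ε ^ L : ℝ) : EReal) :=
      hQL.trans_lt (by exact_mod_cast (by linarith : (ε ^ L : ℝ) < 2 * ε ^ L))
    rw [semiDist, iInf_lt_iff] at hlt
    obtain ⟨v, hv⟩ := hlt
    rw [iInf_lt_iff] at hv
    obtain ⟨hvA, hv⟩ := hv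
    exact ⟨v, hvA, le_of_lt (by exact_mod_cast hv)⟩
  set w' : ℝ → E :=
    fun ε => if h : 0 < ε ∧ ε < η' 0 then (key ε h).choose else (w : ℝ → E) ε with hw'def
  have hmemA : ∀ ε : ℝ, (h : 0 < ε ∧ ε < η' 0) → w' ε ∈ A ε := by
    intro ε h
    rw [hw'def]
    simp only
    rw [dif_pos h]
    exact (key ε h).choose_spec.1
  have hclose : ∀ ε : ℝ, (h : 0 < ε ∧ ε < η' 0) →
      p (Nat.find (hex ε h.1) - 1) ((w : ℝ → E) ε - w' ε)
        ≤ 2 * ε ^ (Nat.find (hex ε h.1) - 1) := by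
    intro ε h
    rw [hw'def]
    simp only
    rw [dif_pos h]
    exact (key ε h).choose_spec.2
  -- the difference is negligible
  have hneg : IsNegligible p (fun ε => (w : ℝ → E) ε - w' ε) := by
    intro n m
    set j := max n (m + 1) with hj
    have hmem2 : Set.Ioo (0 : ℝ) (min (η' j) (1 / 2)) ∈ 𝓝[>] (0 : ℝ) :=
      Ioo_mem_nhdsGT_of_mem ⟨le_refl 0, lt_min (η'pos j) (by norm_num)⟩
    filter_upwards [hmem2] with ε hε
    obtain ⟨hε0, hεlt⟩ := hε
    have hεj : ε < η' j := lt_of_lt_of_le hεlt (min_le_left _ _)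
    have hεhalf : ε ≤ 1 / 2 := le_of_lt (lt_of_lt_of_le hεlt (min_le_right _ _))
    have h0 : 0 < ε ∧ ε < η' 0 := ⟨hε0, hεj.trans_le (η'anti (Nat.zero_le j))⟩
    have hjK : j < Nat.find (hex ε h0.1) := by
      by_contra hcon
      push_neg at hcon
      have h1 : η' (Nat.find (hex ε h0.1)) ≤ ε := Nat.find_spec (hex ε h0.1)
      have h2 : η' j ≤ η' (Nat.find (hex ε h0.1)) := η'anti hcon
      linarith
    set L := Nat.find (hex ε h0.1) - 1 with hL
    have hjL : j ≤ L := by omega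
    have hnL : n ≤ L := le_trans (le_max_left _ _) hjL
    have hm1L : m + 1 ≤ L := le_trans (le_max_right _ _) hjL
    have hle : p n ≤ p L := hp hnL
    have h1 : p n ((w : ℝ → E) ε - w' ε) ≤ p L ((w : ℝ → E) ε - w' ε) :=
      Seminorm.le_def.mp hle _
    have h2 := hclose ε h0
    have h3 : ε ^ L ≤ ε ^ (m + 1) :=
      pow_le_pow_of_le_one hε0.le (by linarith) hm1L
    have h4 : (0 : ℝ) ≤ ε ^ m := pow_nonneg hε0.le m
    calc p n ((w : ℝ → E) ε - w' ε) ≤ 2 * ε ^ L := le_trans h1 h2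
      _ ≤ 2 * ε ^ (m + 1) := by linarith
      _ = 2 * ε * ε ^ m := by ring
      _ ≤ 1 * ε ^ m := mul_le_mul_of_nonneg_right (by linarith) h4
      _ = ε ^ m := one_mul _
  -- `w'` is moderate
  have hd : IsModerate p (fun ε => w' ε - (w : ℝ → E) ε) := by
    intro i
    refine ⟨0, ?_⟩
    filter_upwards [hneg i 0] with ε h1
    have heq : p i (w' ε - (w : ℝ → E) ε) = p i ((w : ℝ → E) ε - w' ε) := by
      rw [← neg_sub, map_neg_eq_map]
    rw [heq]
    simpa using h1
  have hw'mod : w' ∈ moderateGroup p := by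
    have hadd := (moderateGroup p).add_mem w.2 (show (fun ε => w' ε - (w : ℝ → E) ε) ∈
      moderateGroup p from hd)
    have heq : ((w : ℝ → E) + fun ε => w' ε - (w : ℝ → E) ε) = w' := by
      funext ε; simp
    rwa [heq] at hadd
  refine ⟨⟨w', hw'mod⟩, ?_, ?_⟩
  · rw [QuotientAddGroup.eq]
    show IsNegligible p
      ((-(⟨w', hw'mod⟩ : moderateGroup p) + w : moderateGroup p) : ℝ → E)
    intro i m
    filter_upwards [hneg i m] with ε h
    have heq : ((-(⟨w', hw'mod⟩ : moderateGroup p) + w : moderateGroup p) : ℝ → E) ε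
        = (w : ℝ → E) ε - w' ε := by
      simp [neg_add_eq_sub]
    rw [heq]
    exact h
  · have hIoo : Set.Ioo (0 : ℝ) (η' 0) ∈ 𝓝[>] (0 : ℝ) :=
      Ioo_mem_nhdsGT_of_mem ⟨le_refl 0, η'pos 0⟩
    filter_upwards [hIoo] with ε hε
    exact hmemA ε ⟨hε.1, hε.2⟩

end Statement0Aux

/-- If the topology of `E` is generated by an increasing sequence of
seminorms `(p_n)`, the internal set `[(A_ε)]` admits the alternative description via
negligibility of the distance nets `(d_n(u_ε, A_ε))_ε`, and this description does not
depend on the chosen representative `(u_ε)` of `u`. -/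
theorem internalSet_eq_dist_description
    {E : Type*} [AddCommGroup E] [Module ℝ E]
    (p : ℕ → Seminorm ℝ E) (hp : Monotone p) (A : ℝ → Set E) :
    internalSet p A =
      {u : Colombeau p | ∀ w : moderateGroup p,
        (QuotientAddGroup.mk w : Colombeau p) = u →
        ∀ n m : ℕ, ∀ᶠ ε in 𝓝[>] (0 : ℝ),
          semiDist p n ((w : ℝ → E) ε) (A ε) ≤ ((ε ^ m : ℝ) : EReal)} ∧
    internalSet p A =
      {u : Colombeau p | ∃ w : moderateGroup p,
        (QuotientAddGroup.mk w : Colombeau p) = u ∧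
        ∀ n m : ℕ, ∀ᶠ ε in 𝓝[>] (0 : ℝ),
          semiDist p n ((w : ℝ → E) ε) (A ε) ≤ ((ε ^ m : ℝ) : EReal)} := by
  constructor
  · ext u
    constructor
    · intro hu w hw n m
      exact aux_forward p A hu w hw n m
    · intro hu
      obtain ⟨w, rfl⟩ := QuotientAddGroup.mk_surjective u
      exact aux_backward p hp A w (hu w rfl)
  · ext u
    constructor
    · intro hu
      obtain ⟨w, rfl⟩ := QuotientAddGroup.mk_surjective u
      exact ⟨w, rfl, fun n m => aux_forward p A hu w rfl n m⟩
    · rintro ⟨w, rfl, hd⟩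
      exact aux_backward p hp A w hd

end ColombeauPaper
end
end

section
/- If E has a countable base of neighborhoods of 0 (equivalently, the topology of E is generated by an increasing sequence of seminorms (p_n)_{n∈ℕ}), then every internal subset of G_E is closed with respect to the sharp topology. -/
open Filter Topology Asymptotics

noncomputable section

namespace ColombeauPaper

variable {ι κ : Type*} {E : Type*} [AddCommGroup E] [Module ℝ E]
  {F : Type*} [AddCommGroup F] [Module ℝ F]

lemma isModerate_of_isNegligible (p : ι → Seminorm ℝ E) {u : ℝ → E}
    (h : IsNegligible p u) : IsModerate p u := by
  intro i
  refine ⟨0, ?_⟩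
  filter_upwards [h i 0] with ε hε
  simpa using hε

lemma sharpSemi_set_bddBelow (p : ι → Seminorm ℝ E) (i : ι) (u : Colombeau p) :
    BddBelow {r : ℝ | ∃ (b : ℝ) (w : moderateGroup p),
      (QuotientAddGroup.mk w : Colombeau p) = u ∧
      r = Real.exp (-b) ∧
      (fun ε => (p i ((w : ℝ → E) ε) : ℝ)) =O[𝓝[>] (0 : ℝ)] fun ε => ε ^ b} := by
  refine ⟨0, ?_⟩
  rintro r ⟨b, w, -, rfl, -⟩
  exact (Real.exp_pos _).le

/-- If the topology of `E` is generated by an increasing sequence of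
seminorms (equivalently, `E` has a countable base of neighborhoods of `0`), then every
internal subset of `𝒢_E` is closed in the sharp topology. -/
theorem isClosed_of_internal
    {E : Type*} [AddCommGroup E] [Module ℝ E]
    (p : ℕ → Seminorm ℝ E) (hp : Monotone p)
    (A : Set (Colombeau p)) (hA : IsInternal p A) :
    @IsClosed _ (sharpTopology p) A := by
  obtain ⟨Anet, rfl⟩ := hA
  letI := sharpTopology p
  rw [← isOpen_compl_iff, isOpen_iff_forall_mem_open]
  intro u hu
  by_cases hclaim : ∃ n : ℕ, ∀ x ∈ internalSet p Anet,
      ¬ sharpSemi p n (x - u) < Real.exp (-(n : ℝ))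
  · obtain ⟨n, hn⟩ := hclaim
    refine ⟨{x | sharpSemi p n (x - u) < Real.exp (-(n : ℝ))}, ?_, ?_, ?_⟩
    · intro x hx hxA
      exact hn x hxA hx
    · exact TopologicalSpace.isOpen_generateFrom_of_mem
        ⟨u, n, Real.exp (-(n : ℝ)), Real.exp_pos _, rfl⟩
    · show sharpSemi p n (u - u) < Real.exp (-(n : ℝ))
      rw [sub_self]
      have hmem : Real.exp (-((n : ℝ) + 1)) ∈ {r : ℝ | ∃ (b : ℝ) (w : moderateGroup p),
          (QuotientAddGroup.mk w : Colombeau p) = (0 : Colombeau p) ∧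
          r = Real.exp (-b) ∧
          (fun ε => (p n ((w : ℝ → E) ε) : ℝ)) =O[𝓝[>] (0 : ℝ)] fun ε => ε ^ b} := by
        refine ⟨(n : ℝ) + 1, 0, by simp, rfl, ?_⟩
        have : (fun ε => (p n (((0 : moderateGroup p) : ℝ → E) ε) : ℝ)) = fun _ => (0 : ℝ) := by
          funext ε; simp
        rw [this]
        exact isBigO_zero _ _
      calc sharpSemi p n (0 : Colombeau p)
          ≤ Real.exp (-((n : ℝ) + 1)) := csInf_le (sharpSemi_set_bddBelow p n 0) hmem
        _ < Real.exp (-(n : ℝ)) := Real.exp_lt_exp.2 (by linarith)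
  · exfalso
    push_neg at hclaim
    choose v hvA hlt using hclaim
    choose a hav hamem using hvA
    obtain ⟨urep, hurep⟩ := QuotientAddGroup.mk'_surjective (negligibleGroup p) u
    have hurepmk : (QuotientAddGroup.mk urep : Colombeau p) = u := hurep
    unfold sharpSemi at hlt
    -- Step 1: for each n, a good eventual bound
    have hkey : ∀ n : ℕ, ∀ᶠ ε in 𝓝[>] (0 : ℝ),
        ((a n : ℝ → E) ε ∈ Anet ε) ∧
          p n ((a n : ℝ → E) ε - (urep : ℝ → E) ε) ≤ 2 * ε ^ n := by
      intro n
      have hvn : (QuotientAddGroup.mk (a n - urep) : Colombeau p) = v n - u := by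
        rw [QuotientAddGroup.mk_sub, hav n, hurepmk]
      obtain ⟨M, hM⟩ := (a n - urep).2 n
      have hSne : Set.Nonempty {r : ℝ | ∃ (b : ℝ) (w : moderateGroup p),
          (QuotientAddGroup.mk w : Colombeau p) = v n - u ∧
          r = Real.exp (-b) ∧
          (fun ε => (p n ((w : ℝ → E) ε) : ℝ)) =O[𝓝[>] (0 : ℝ)] fun ε => ε ^ b} := by
        refine ⟨Real.exp (-(-(M : ℝ))), -(M : ℝ), a n - urep, hvn, rfl, ?_⟩
        rw [Asymptotics.isBigO_iff]
        refine ⟨1, ?_⟩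
        filter_upwards [hM, self_mem_nhdsWithin] with ε h1 h2
        have hε : (0 : ℝ) < ε := h2
        have hr : ε ^ (-(M : ℝ)) = ε ^ (-(M : ℤ)) := by
          rw [show (-(M : ℝ)) = ((-(M : ℤ) : ℤ) : ℝ) by push_cast; ring, Real.rpow_intCast]
        rw [Real.norm_eq_abs, Real.norm_eq_abs, abs_of_nonneg (apply_nonneg _ _), hr,
          abs_of_pos (by positivity), one_mul]
        exact h1
      obtain ⟨r, hrS, hrlt⟩ := exists_lt_of_csInf_lt hSne (hlt n)
      obtain ⟨b, w, hwmk, rfl, hbig⟩ := hrS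
      have hbn : (n : ℝ) < b := by
        have := Real.exp_lt_exp.1 hrlt
        linarith
      have hz : (a n - urep) - w ∈ negligibleGroup p :=
        (QuotientAddGroup.eq_iff_sub_mem).1 (hvn.trans hwmk.symm)
      have hzneg : IsNegligible p (((a n - urep) - w : moderateGroup p) : ℝ → E) := hz
      obtain ⟨C, hC, hCbd⟩ := hbig.exists_pos
      have hCb := hCbd.bound
      have ht : Tendsto (fun ε : ℝ => ε ^ (b - (n : ℝ))) (𝓝[>] (0 : ℝ)) (𝓝 0) := by
        have hc : ContinuousAt (fun x : ℝ => x ^ (b - (n : ℝ))) 0 :=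
          Real.continuousAt_rpow_const 0 _ (Or.inr (by linarith))
        have h0 : (0 : ℝ) ^ (b - (n : ℝ)) = 0 := Real.zero_rpow (ne_of_gt (by linarith))
        simpa [h0] using (hc.tendsto.mono_left nhdsWithin_le_nhds)
      have hsmall : ∀ᶠ ε in 𝓝[>] (0 : ℝ), ε ^ (b - (n : ℝ)) < 1 / C :=
        ht.eventually_lt_const (by positivity)
      have hwb : ∀ᶠ ε in 𝓝[>] (0 : ℝ), p n ((w : ℝ → E) ε) ≤ ε ^ n := by
        filter_upwards [hCb, hsmall, self_mem_nhdsWithin] with ε h1 h2 h3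
        have hε : (0 : ℝ) < ε := h3
        have e2 : ε ^ (b - (n : ℝ)) * ε ^ (n : ℕ) = ε ^ b := by
          rw [← Real.rpow_natCast ε n, ← Real.rpow_add hε]
          norm_num
        have h1' : p n ((w : ℝ → E) ε) ≤ C * (ε ^ (b - (n : ℝ)) * ε ^ (n : ℕ)) := by
          calc p n ((w : ℝ → E) ε) = ‖(p n ((w : ℝ → E) ε) : ℝ)‖ := by
                rw [Real.norm_eq_abs, abs_of_nonneg (apply_nonneg _ _)]
            _ ≤ C * ‖ε ^ b‖ := h1
            _ = C * (ε ^ (b - (n : ℝ)) * ε ^ (n : ℕ)) := by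
                rw [Real.norm_eq_abs, abs_of_pos (Real.rpow_pos_of_pos hε b), ← e2]
        have hεn : (0 : ℝ) ≤ ε ^ (n : ℕ) := pow_nonneg hε.le n
        calc p n ((w : ℝ → E) ε) ≤ C * (ε ^ (b - (n : ℝ)) * ε ^ (n : ℕ)) := h1'
          _ ≤ C * ((1 / C) * ε ^ (n : ℕ)) :=
              mul_le_mul_of_nonneg_left
                (mul_le_mul_of_nonneg_right h2.le hεn) hC.le
          _ = ε ^ (n : ℕ) := by field_simp
      filter_upwards [hwb, hzneg n n, hamem n] with ε h1 h2 h3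
      refine ⟨h3, ?_⟩
      have hval : (a n : ℝ → E) ε - (urep : ℝ → E) ε
          = (w : ℝ → E) ε + (((a n - urep) - w : moderateGroup p) : ℝ → E) ε := by
        simp only [AddSubgroup.coe_sub, Pi.sub_apply]
        abel
      calc p n ((a n : ℝ → E) ε - (urep : ℝ → E) ε)
          = p n ((w : ℝ → E) ε + (((a n - urep) - w : moderateGroup p) : ℝ → E) ε) := by
            rw [hval]
        _ ≤ p n ((w : ℝ → E) ε) + p n ((((a n - urep) - w : moderateGroup p) : ℝ → E) ε) :=
            map_add_le_add _ _ _
        _ ≤ ε ^ n + ε ^ n := add_le_add h1 h2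
        _ = 2 * ε ^ n := by ring
    -- Step 2: extract thresholds
    have hδex : ∀ n : ℕ, ∃ δ : ℝ, 0 < δ ∧ ∀ ε : ℝ, 0 < ε → ε < δ →
        ((a n : ℝ → E) ε ∈ Anet ε ∧
          p n ((a n : ℝ → E) ε - (urep : ℝ → E) ε) ≤ 2 * ε ^ n) := by
      intro n
      obtain ⟨t, ht, hsub⟩ := mem_nhdsGT_iff_exists_Ioo_subset.1 (hkey n)
      exact ⟨t, ht, fun ε h1 h2 => hsub ⟨h1, h2⟩⟩
    choose δ hδpos hδ using hδex
    -- Step 3: decreasing sequence η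
    set η : ℕ → ℝ := fun n =>
      Nat.rec (min (δ 0) 1 / 2) (fun k ih => min (δ (k + 1)) ih / 2) n with hηdef
    have hη0 : η 0 = min (δ 0) 1 / 2 := rfl
    have hηs : ∀ n, η (n + 1) = min (δ (n + 1)) (η n) / 2 := fun n => rfl
    have hηpos : ∀ n, 0 < η n := by
      intro n
      induction n with
      | zero => rw [hη0]; exact div_pos (lt_min (hδpos 0) one_pos) two_pos
      | succ k ih => rw [hηs]; exact div_pos (lt_min (hδpos _) ih) two_pos
    have hηδ : ∀ n, η n < δ n := by
      intro n
      cases n with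
      | zero =>
        rw [hη0]
        have h := hδpos 0
        have h2 : min (δ 0) 1 ≤ δ 0 := min_le_left _ _
        linarith
      | succ k =>
        rw [hηs]
        have h := hδpos (k + 1)
        have h2 : min (δ (k + 1)) (η k) ≤ δ (k + 1) := min_le_left _ _
        linarith
    have hηhalf : ∀ n, η (n + 1) ≤ η n / 2 := by
      intro n
      rw [hηs]
      have h2 : min (δ (n + 1)) (η n) ≤ η n := min_le_right _ _
      linarith
    have hηanti : Antitone η := antitone_nat_of_succ_le fun n =>
      le_trans (hηhalf n) (by linarith [hηpos n])
    have hηbound : ∀ n, η n ≤ (1 / 2 : ℝ) ^ (n + 1) := by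
      intro n
      induction n with
      | zero =>
        rw [hη0, pow_one]
        have h2 : min (δ 0) 1 ≤ 1 := min_le_right _ _
        linarith
      | succ k ih =>
        rw [hηs, pow_succ]
        have h2 : min (δ (k + 1)) (η k) ≤ η k := min_le_right _ _
        linarith
    have hbdd : ∀ ε : ℝ, 0 < ε → BddAbove {n : ℕ | ε ≤ η n} := by
      intro ε hε
      obtain ⟨m, hm⟩ := exists_pow_lt_of_lt_one hε (by norm_num : (1 / 2 : ℝ) < 1)
      refine ⟨m, fun n hn => ?_⟩
      by_contra hc
      push_neg at hc
      have h1 : ((1 : ℝ) / 2) ^ (n + 1) ≤ (1 / 2 : ℝ) ^ m :=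
        pow_le_pow_of_le_one (by norm_num) (by norm_num) (by omega)
      have h2 : ε ≤ η n := hn
      linarith [hηbound n]
    set N : ℝ → ℕ := fun ε => sSup {n : ℕ | ε ≤ η n} with hNdef
    have hNmem : ∀ ε : ℝ, 0 < ε → ε ≤ η 0 → ε ≤ η (N ε) := fun ε h1 h2 =>
      Nat.sSup_mem ⟨0, h2⟩ (hbdd ε h1)
    have hNge : ∀ ε : ℝ, 0 < ε → ∀ k, ε ≤ η k → k ≤ N ε := fun ε h1 k hk =>
      le_csSup (hbdd ε h1) hk
    -- Step 4: the diagonal net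
    set c : ℝ → E := fun ε => (a (N ε) : ℝ → E) ε with hcdef
    have hdneg : IsNegligible p (fun ε => c ε - (urep : ℝ → E) ε) := by
      intro i m
      set K := max i m + 1 with hK
      filter_upwards [Ioc_mem_nhdsGT_of_mem (Set.mem_Ico.2 ⟨le_refl (0 : ℝ), hηpos K⟩)]
        with ε hε
      obtain ⟨hε0, hεK⟩ := hε
      have hKN : K ≤ N ε := hNge ε hε0 K hεK
      have hεN : ε ≤ η (N ε) := hNmem ε hε0 (hεK.trans (hηanti (Nat.zero_le K)))
      have hP := hδ (N ε) ε hε0 (lt_of_le_of_lt hεN (hηδ (N ε)))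
      have hmono : p i (c ε - (urep : ℝ → E) ε) ≤ p (N ε) (c ε - (urep : ℝ → E) ε) :=
        Seminorm.le_def.1 (hp (show i ≤ N ε by omega)) _
      have hε1 : ε ≤ 1 / 2 := by
        have := hηbound 0
        have h2 : ε ≤ η 0 := hεK.trans (hηanti (Nat.zero_le K))
        rw [pow_one] at this
        linarith
      have h2 : p (N ε) (c ε - (urep : ℝ → E) ε) ≤ 2 * ε ^ (N ε) := hP.2
      have h3 : ε ^ (N ε) ≤ ε ^ (m + 1) :=
        pow_le_pow_of_le_one hε0.le (by linarith) (by omega)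
      calc p i (c ε - (urep : ℝ → E) ε) ≤ 2 * ε ^ (N ε) := le_trans hmono h2
        _ ≤ 2 * ε ^ (m + 1) := by linarith
        _ = (2 * ε) * ε ^ m := by ring
        _ ≤ 1 * ε ^ m := mul_le_mul_of_nonneg_right (by linarith) (pow_nonneg hε0.le m)
        _ = ε ^ m := one_mul _
    have hcmod : IsModerate p c := by
      have hco : c = (urep : ℝ → E) + fun ε => c ε - (urep : ℝ → E) ε := by
        funext ε; simp
      rw [hco]
      exact (moderateGroup p).add_mem urep.2 (isModerate_of_isNegligible p hdneg)
    set cM : moderateGroup p := ⟨c, hcmod⟩ with hcMdef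
    have hsub : cM - urep ∈ negligibleGroup p := by
      show IsNegligible p ((cM - urep : moderateGroup p) : ℝ → E)
      have hval : ((cM - urep : moderateGroup p) : ℝ → E)
          = fun ε => c ε - (urep : ℝ → E) ε := by
        funext ε; simp [hcMdef]
      rw [hval]
      exact hdneg
    have hmk : (QuotientAddGroup.mk cM : Colombeau p) = u := by
      rw [← hurepmk]
      exact (QuotientAddGroup.eq_iff_sub_mem).2 hsub
    have hmemev : ∀ᶠ ε in 𝓝[>] (0 : ℝ), (cM : ℝ → E) ε ∈ Anet ε := by
      filter_upwards [Ioc_mem_nhdsGT_of_mem (Set.mem_Ico.2 ⟨le_refl (0 : ℝ), hηpos 0⟩)]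
        with ε hε
      obtain ⟨hε0, hε1⟩ := hε
      have hεN : ε ≤ η (N ε) := hNmem ε hε0 hε1
      exact (hδ (N ε) ε hε0 (lt_of_le_of_lt hεN (hηδ (N ε)))).1
    exact hu ⟨cM, hmk, hmemev⟩

end ColombeauPaper
end
end

section
/- Let E be a normed vector space and let A ⊆ G_E be internal and sharply bounded. Then A has a sharply bounded representative, i.e., there exists a sharply bounded net (Ã_ε)_{ε∈(0,1)} of subsets of E with A = [(Ã_ε)]. -/
open Filter Topology Asymptotics

noncomputable section

namespace ColombeauPaper

variable {ι κ : Type*} {E : Type*} [AddCommGroup E] [Module ℝ E]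
  {F : Type*} [AddCommGroup F] [Module ℝ F]

/-- An internal, sharply bounded subset of `𝒢_E`, `E` a normed space,
has a sharply bounded representative net. -/
theorem exists_sharplyBounded_representative
    {V : Type*} [NormedAddCommGroup V] [NormedSpace ℝ V]
    (A : Set (GN V)) (hA : IsInternal (normFamily V) A) (hb : SharplyBounded A) :
    ∃ Anet : ℝ → Set V, SharplyBoundedNetN Anet ∧ A = internalSet (normFamily V) Anet := by
  obtain ⟨Anet, rfl⟩ := hA
  obtain ⟨M, hM⟩ := hb
  refine ⟨fun ε => Anet ε ∩ {v | ‖v‖ ≤ ε ^ (-((M + 1 : ℕ) : ℤ))}, ⟨M + 1, ?_⟩, ?_⟩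
  · filter_upwards [self_mem_nhdsWithin] with ε _ w hw
    exact hw.2
  · apply Set.Subset.antisymm
    · intro u hu
      obtain ⟨w, hwq, hwA⟩ := hu
      obtain ⟨a, n, haq, hn, hbound⟩ := hM u ⟨w, hwq, hwA⟩
      have hmem : w - a ∈ negligibleGroup (normFamily V) :=
        (QuotientAddGroup.eq_iff_sub_mem).1 (hwq.trans haq.symm)
      have hneg : IsNegligible (normFamily V) ((w - a : moderateGroup (normFamily V)) : ℝ → V) :=
        hmem
      refine ⟨w, hwq, ?_⟩
      filter_upwards [hwA, hbound, hneg () 1, hn 1, small_mem] with ε h1 h2 h3 h4 h5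
      obtain ⟨hε, hε2⟩ := h5
      refine ⟨h1, ?_⟩
      have hd : ((w - a : moderateGroup (normFamily V)) : ℝ → V) ε
          = (w : ℝ → V) ε - (a : ℝ → V) ε := rfl
      have h3' : ‖(w : ℝ → V) ε - (a : ℝ → V) ε‖ ≤ ε ^ 1 := by
        have := h3
        simp only [normFamily, coe_normSeminorm] at this
        rw [hd] at this
        exact this
      have h4' : n ε ≤ ε := by
        have := le_of_abs_le h4
        simpa using this
      have htri : ‖(w : ℝ → V) ε‖ ≤ ‖(a : ℝ → V) ε‖ + ε := by
        calc ‖(w : ℝ → V) ε‖ ≤ ‖(a : ℝ → V) ε‖ + ‖(w : ℝ → V) ε - (a : ℝ → V) ε‖ := by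
              have := norm_sub_norm_le ((w : ℝ → V) ε) ((a : ℝ → V) ε)
              linarith [norm_sub_rev ((w : ℝ → V) ε) ((a : ℝ → V) ε) ▸
                norm_sub_norm_le ((w : ℝ → V) ε) ((a : ℝ → V) ε)]
          _ ≤ ‖(a : ℝ → V) ε‖ + ε := by
              have : ε ^ 1 = ε := pow_one ε
              linarith [h3', this]
      have hrpow : ε ^ (-(M : ℝ)) = ε ^ (-(M : ℤ)) := by
        rw [← Real.rpow_intCast ε (-(M : ℤ))]
        norm_num
      have hbnd : ‖(w : ℝ → V) ε‖ ≤ ε ^ (-(M : ℤ)) + 2 * ε := by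
        rw [← hrpow]; linarith
      -- now ε^(-M) + 2ε ≤ ε^(-(M+1))
      have hinv : (2 : ℝ) ≤ ε⁻¹ := by
        nlinarith [mul_inv_cancel₀ (ne_of_gt hε)]
      have hy : (1 : ℝ) ≤ ε ^ (-(M : ℤ)) := by
        rw [zpow_neg_natCast_eq]
        apply one_le_zpow₀ ((one_le_inv₀ hε).2 (by linarith))
        positivity
      have hstep : ε ^ (-(M : ℤ)) + 2 * ε ≤ ε ^ (-((M + 1 : ℕ) : ℤ)) := by
        have hsplit : ε ^ (-((M + 1 : ℕ) : ℤ)) = ε ^ (-(M : ℤ)) * ε⁻¹ := by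
          rw [zpow_neg_natCast_eq, zpow_neg_natCast_eq]
          push_cast
          rw [zpow_add₀ (by positivity : (ε⁻¹ : ℝ) ≠ 0), zpow_one]
        rw [hsplit]
        nlinarith
      exact le_trans hbnd hstep
    · intro u hu
      obtain ⟨w, hwq, hwA⟩ := hu
      refine ⟨w, hwq, ?_⟩
      filter_upwards [hwA] with ε h
      exact h.1

end ColombeauPaper
end
end

section
/- Let E be a normed vector space, let A and B be non-empty internal subsets of G_E, and let A be sharply bounded. Then the set {‖u−v‖ : u∈A, v∈B} ⊆ R̃ reaches a minimum in R̃: there exist u₀∈A and v₀∈B such that ‖u₀−v₀‖ ≤ ‖u−v‖ for all u∈A and v∈B. -/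
open Filter Topology Asymptotics

noncomputable section

namespace ColombeauPaper

variable {ι κ : Type*} {E : Type*} [AddCommGroup E] [Module ℝ E]
  {F : Type*} [AddCommGroup F] [Module ℝ F]

lemma two_le_inv' {ε : ℝ} (hε : 0 < ε) (hε2 : ε ≤ 1/2) : (2:ℝ) ≤ ε⁻¹ := by
  nlinarith [mul_inv_cancel₀ (ne_of_gt hε), inv_pos.2 hε]

lemma zpow_neg_mono' {ε : ℝ} (hε : 0 < ε) (hε2 : ε ≤ 1/2) {k l : ℕ} (hkl : k ≤ l) :
    ε ^ (-(k:ℤ)) ≤ ε ^ (-(l:ℤ)) := by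
  have hinv : (1:ℝ) ≤ ε⁻¹ := (one_le_inv₀ hε).2 (by linarith)
  rw [zpow_neg_natCast_eq, zpow_neg_natCast_eq]
  exact zpow_le_zpow_right₀ hinv (by exact_mod_cast hkl)

lemma one_le_zpow_neg' {ε : ℝ} (hε : 0 < ε) (hε2 : ε ≤ 1/2) (k : ℕ) :
    (1:ℝ) ≤ ε ^ (-(k:ℤ)) := by
  have := zpow_neg_mono' hε hε2 (Nat.zero_le k)
  simpa using this

lemma zpow_neg_succ' {ε : ℝ} (hε : 0 < ε) (hε2 : ε ≤ 1/2) (M : ℕ) :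
    ε ^ (-(M:ℤ)) + 1 ≤ ε ^ (-((M+1:ℕ):ℤ)) := by
  have h2 : (2:ℝ) ≤ ε⁻¹ := two_le_inv' hε hε2
  have h1 : (1:ℝ) ≤ ε ^ (-(M:ℤ)) := one_le_zpow_neg' hε hε2 M
  have heq : ε ^ (-((M+1:ℕ):ℤ)) = ε ^ (-(M:ℤ)) * ε⁻¹ := by
    have hexp : (-((M+1:ℕ):ℤ)) = (-(M:ℤ)) + (-1) := by push_cast; ring
    rw [hexp, zpow_add₀ (ne_of_gt hε), zpow_neg_one]
  rw [heq]
  nlinarith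

lemma zpow_neg_add_three' {ε : ℝ} (hε : 0 < ε) (hε2 : ε ≤ 1/2) (L : ℕ) :
    4 * ε ^ (-(L:ℤ)) ≤ ε ^ (-((L+3:ℕ):ℤ)) := by
  have h2 : (2:ℝ) ≤ ε⁻¹ := two_le_inv' hε hε2
  have h1 : (1:ℝ) ≤ ε ^ (-(L:ℤ)) := one_le_zpow_neg' hε hε2 L
  have heq : ε ^ (-((L+3:ℕ):ℤ)) = ε ^ (-(L:ℤ)) * (ε⁻¹ * ε⁻¹ * ε⁻¹) := by
    have hexp : (-((L+3:ℕ):ℤ)) = (-(L:ℤ)) + (-1) + (-1) + (-1) := by push_cast; ring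
    rw [hexp, zpow_add₀ (ne_of_gt hε), zpow_add₀ (ne_of_gt hε), zpow_add₀ (ne_of_gt hε),
      zpow_neg_one]
    ring
  rw [heq]
  have h8 : (8:ℝ) ≤ ε⁻¹ * ε⁻¹ * ε⁻¹ := by nlinarith
  nlinarith

lemma negligible_exp_neg_inv : IsNegligibleR (fun ε => Real.exp (-ε⁻¹)) := by
  intro m
  have h1 : Tendsto (fun ε : ℝ => ε⁻¹) (𝓝[>] (0:ℝ)) atTop := tendsto_inv_nhdsGT_zero
  have h2 := (Real.tendsto_pow_mul_exp_neg_atTop_nhds_zero m).comp h1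
  have h3 : ∀ᶠ ε in 𝓝[>] (0:ℝ), (ε⁻¹) ^ m * Real.exp (-ε⁻¹) < 1 :=
    h2.eventually_lt_const one_pos
  filter_upwards [h3, self_mem_nhdsWithin] with ε hlt hε
  have hε : (0:ℝ) < ε := hε
  have hpow : (0:ℝ) < ε ^ m := pow_pos hε m
  rw [abs_of_pos (Real.exp_pos _)]
  have key : ε ^ m * ((ε⁻¹) ^ m * Real.exp (-ε⁻¹)) = Real.exp (-ε⁻¹) := by
    rw [← mul_assoc, ← mul_pow, mul_inv_cancel₀ (ne_of_gt hε), one_pow, one_mul]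
  calc Real.exp (-ε⁻¹) = ε ^ m * ((ε⁻¹) ^ m * Real.exp (-ε⁻¹)) := key.symm
    _ ≤ ε ^ m * 1 := mul_le_mul_of_nonneg_left hlt.le hpow.le
    _ = ε ^ m := mul_one _

/-- If `A`, `B` are non-empty internal subsets of `𝒢_E` (`E` normed)
and `A` is sharply bounded, then `{‖u - v‖ : u ∈ A, v ∈ B}` reaches a minimum in `ℝ̃`. -/
theorem exists_min_norm_sub
    {V : Type*} [NormedAddCommGroup V] [NormedSpace ℝ V]
    (A B : Set (GN V)) (hA : IsInternal (normFamily V) A) (hB : IsInternal (normFamily V) B)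
    (hAne : A.Nonempty) (hBne : B.Nonempty) (hAb : SharplyBounded A) :
    ∃ u₀ ∈ A, ∃ v₀ ∈ B, ∀ u ∈ A, ∀ v ∈ B, normLeNorm (u₀ - v₀) (u - v) := by
  classical
  obtain ⟨Anet, rfl⟩ := hA
  obtain ⟨Bnet, rfl⟩ := hB
  obtain ⟨M, hM⟩ := hAb
  set N : ℕ := M + 1 with hN
  set A' : ℝ → Set V := fun ε => Anet ε ∩ Metric.closedBall 0 (ε ^ (-(N:ℤ))) with hA'
  -- every element of A has a representative eventually in A'
  have keyA : ∀ u ∈ internalSet (normFamily V) Anet,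
      ∃ w : moderateGroup (normFamily V),
        (QuotientAddGroup.mk w : GN V) = u ∧
          ∀ᶠ ε in 𝓝[>] (0:ℝ), (w : ℝ → V) ε ∈ A' ε := by
    intro u hu
    obtain ⟨w', n, hw'mk, hn, hbound⟩ := hM u hu
    obtain ⟨w, hwmk, hwA⟩ := hu
    have hmkeq : (QuotientAddGroup.mk w : GN V) = QuotientAddGroup.mk w' := by
      rw [hwmk, hw'mk]
    have hsub : IsNegligible (normFamily V)
        ((w - w' : moderateGroup (normFamily V)) : ℝ → V) :=
      (QuotientAddGroup.eq_iff_sub_mem).1 hmkeq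
    refine ⟨w, hwmk, ?_⟩
    filter_upwards [hwA, hsub () 1, hn 1, hbound, small_mem] with ε h1 h2 h3 h4 h5
    obtain ⟨hε, hε2⟩ := h5
    refine ⟨h1, ?_⟩
    rw [Metric.mem_closedBall, dist_zero_right]
    have h2' : ‖(w : ℝ → V) ε - (w' : ℝ → V) ε‖ ≤ ε := by
      have : normFamily V () (((w - w' : moderateGroup (normFamily V)) : ℝ → V) ε) =
          ‖(w : ℝ → V) ε - (w' : ℝ → V) ε‖ := by
        simp [coe_normSeminorm]
      rw [this] at h2
      simpa using h2
    have h4' : ‖(w' : ℝ → V) ε‖ ≤ ε ^ (-(M:ℤ)) + n ε := by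
      have hcast : ε ^ (-(M:ℝ)) = ε ^ (-(M:ℤ)) := by
        rw [show (-(M:ℝ)) = ((-(M:ℤ) : ℤ) : ℝ) by push_cast; ring, Real.rpow_intCast]
      rwa [hcast] at h4
    have h3' : |n ε| ≤ ε := by simpa using h3
    have htri : ‖(w : ℝ → V) ε‖ ≤ ‖(w' : ℝ → V) ε‖ + ‖(w : ℝ → V) ε - (w' : ℝ → V) ε‖ := by
      have := norm_le_norm_add_norm_sub ((w : ℝ → V) ε) ((w' : ℝ → V) ε)
      have heq : ‖(w : ℝ → V) ε - (w' : ℝ → V) ε‖ = ‖(w' : ℝ → V) ε - (w : ℝ → V) ε‖ :=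
        norm_sub_rev _ _
      rw [heq]
      exact norm_le_norm_add_norm_sub _ _
    have hstep : ε ^ (-(M:ℤ)) + 1 ≤ ε ^ (-(N:ℤ)) := by
      rw [hN]; exact zpow_neg_succ' hε hε2 M
    have habs : n ε ≤ ε := (le_abs_self _).trans h3'
    linarith
  obtain ⟨a0, ha0⟩ := hAne
  obtain ⟨b0, hb0⟩ := hBne
  obtain ⟨wa, hwamk, hwaA⟩ := keyA a0 ha0
  obtain ⟨wb, hwbmk, hwbB⟩ := hb0
  -- choose near-minimizers
  have hex : ∀ ε : ℝ, ∃ zz : V × V,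
      (0 < ε → (A' ε).Nonempty → (Bnet ε).Nonempty →
        zz.1 ∈ A' ε ∧ zz.2 ∈ Bnet ε ∧
          ∀ x ∈ A' ε, ∀ y ∈ Bnet ε, ‖zz.1 - zz.2‖ ≤ ‖x - y‖ + Real.exp (-ε⁻¹)) := by
    intro ε
    by_cases hε : 0 < ε
    · by_cases hAe : (A' ε).Nonempty
      · by_cases hBe : (Bnet ε).Nonempty
        · obtain ⟨xa, hxa⟩ := hAe
          obtain ⟨yb, hyb⟩ := hBe
          set S : Set ℝ := {r : ℝ | ∃ x ∈ A' ε, ∃ y ∈ Bnet ε, r = ‖x - y‖} with hS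
          have hSne : S.Nonempty := ⟨‖xa - yb‖, xa, hxa, yb, hyb, rfl⟩
          have hSbdd : BddBelow S := by
            refine ⟨0, ?_⟩
            rintro r ⟨x, hx, y, hy, rfl⟩
            positivity
          obtain ⟨r, hrS, hrlt⟩ := Real.lt_sInf_add_pos hSne (Real.exp_pos (-ε⁻¹))
          obtain ⟨x, hx, y, hy, rfl⟩ := hrS
          refine ⟨(x, y), fun _ _ _ => ⟨hx, hy, fun x' hx' y' hy' => ?_⟩⟩
          have hle : sInf S ≤ ‖x' - y'‖ := csInf_le hSbdd ⟨x', hx', y', hy', rfl⟩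
          simp only
          linarith
        · exact ⟨((wa : ℝ → V) ε, (wb : ℝ → V) ε), fun _ _ h => absurd h hBe⟩
      · exact ⟨((wa : ℝ → V) ε, (wb : ℝ → V) ε), fun _ h _ => absurd h hAe⟩
    · exact ⟨((wa : ℝ → V) ε, (wb : ℝ → V) ε), fun h _ _ => absurd h hε⟩
  choose z hzspec using hex
  have hzgood : ∀ᶠ ε in 𝓝[>] (0:ℝ), (z ε).1 ∈ A' ε ∧ (z ε).2 ∈ Bnet ε ∧
      ∀ x ∈ A' ε, ∀ y ∈ Bnet ε, ‖(z ε).1 - (z ε).2‖ ≤ ‖x - y‖ + Real.exp (-ε⁻¹) := by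
    filter_upwards [hwaA, hwbB, self_mem_nhdsWithin] with ε h1 h2 h3
    exact hzspec ε h3 ⟨_, h1⟩ ⟨_, h2⟩
  -- moderateness of the chosen nets
  have hu0mod : IsModerate (normFamily V) (fun ε => (z ε).1) := by
    intro i
    refine ⟨N, ?_⟩
    filter_upwards [hzgood] with ε h
    have hb := h.1.2
    rw [Metric.mem_closedBall, dist_zero_right] at hb
    simpa [coe_normSeminorm] using hb
  obtain ⟨Ma, hMa⟩ := wa.2 ()
  obtain ⟨Mb, hMb⟩ := wb.2 ()
  set L : ℕ := N + Ma + Mb with hL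
  have hv0mod : IsModerate (normFamily V) (fun ε => (z ε).2) := by
    intro i
    refine ⟨L + 3, ?_⟩
    filter_upwards [hzgood, hwaA, hwbB, hMa, hMb, small_mem] with ε h ha hbmem hma hmb hsm
    obtain ⟨hε, hε2⟩ := hsm
    have hzd : ‖(z ε).1 - (z ε).2‖ ≤ ‖(wa : ℝ → V) ε - (wb : ℝ → V) ε‖ + Real.exp (-ε⁻¹) :=
      h.2.2 _ ha _ hbmem
    have h1 : ‖(z ε).2‖ ≤ ‖(z ε).1‖ + ‖(z ε).1 - (z ε).2‖ :=
      norm_le_norm_add_norm_sub _ _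
    have hz1 : ‖(z ε).1‖ ≤ ε ^ (-(N:ℤ)) := by
      have hb := h.1.2
      rwa [Metric.mem_closedBall, dist_zero_right] at hb
    have hwan : ‖(wa : ℝ → V) ε‖ ≤ ε ^ (-(Ma:ℤ)) := by simpa [coe_normSeminorm] using hma
    have hwbn : ‖(wb : ℝ → V) ε‖ ≤ ε ^ (-(Mb:ℤ)) := by simpa [coe_normSeminorm] using hmb
    have hexp1 : Real.exp (-ε⁻¹) ≤ 1 := by
      rw [Real.exp_le_one_iff]
      simp [le_of_lt (inv_pos.2 hε)]
    have hmono1 : ε ^ (-(N:ℤ)) ≤ ε ^ (-(L:ℤ)) := zpow_neg_mono' hε hε2 (by omega)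
    have hmono2 : ε ^ (-(Ma:ℤ)) ≤ ε ^ (-(L:ℤ)) := zpow_neg_mono' hε hε2 (by omega)
    have hmono3 : ε ^ (-(Mb:ℤ)) ≤ ε ^ (-(L:ℤ)) := zpow_neg_mono' hε hε2 (by omega)
    have hone : (1:ℝ) ≤ ε ^ (-(L:ℤ)) := one_le_zpow_neg' hε hε2 L
    have hfin : 4 * ε ^ (-(L:ℤ)) ≤ ε ^ (-((L+3:ℕ):ℤ)) := zpow_neg_add_three' hε hε2 L
    have htr : ‖(wa : ℝ → V) ε - (wb : ℝ → V) ε‖ ≤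
        ‖(wa : ℝ → V) ε‖ + ‖(wb : ℝ → V) ε‖ := norm_sub_le _ _
    have : normFamily V i ((z ε).2) = ‖(z ε).2‖ := by simp [coe_normSeminorm]
    rw [this]
    linarith
  set u0w : moderateGroup (normFamily V) := ⟨fun ε => (z ε).1, hu0mod⟩ with hu0w
  set v0w : moderateGroup (normFamily V) := ⟨fun ε => (z ε).2, hv0mod⟩ with hv0w
  refine ⟨QuotientAddGroup.mk u0w, ⟨u0w, rfl, ?_⟩,
    QuotientAddGroup.mk v0w, ⟨v0w, rfl, ?_⟩, ?_⟩
  · filter_upwards [hzgood] with ε h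
    exact h.1.1
  · filter_upwards [hzgood] with ε h
    exact h.2.1
  · intro u hu v hv
    obtain ⟨wu, hwumk, hwuA⟩ := keyA u hu
    obtain ⟨wv, hwvmk, hwvB⟩ := hv
    refine ⟨u0w - v0w, wu - wv, fun ε => Real.exp (-ε⁻¹), ?_, ?_, negligible_exp_neg_inv, ?_⟩
    · rw [QuotientAddGroup.mk_sub]
    · rw [QuotientAddGroup.mk_sub, hwumk, hwvmk]
    · filter_upwards [hzgood, hwuA, hwvB] with ε h h1 h2
      have hkey := h.2.2 _ h1 _ h2
      have e1 : ((u0w - v0w : moderateGroup (normFamily V)) : ℝ → V) ε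
          = (z ε).1 - (z ε).2 := rfl
      have e2 : ((wu - wv : moderateGroup (normFamily V)) : ℝ → V) ε
          = (wu : ℝ → V) ε - (wv : ℝ → V) ε := rfl
      rw [e1, e2]
      exact hkey

end ColombeauPaper
end
end

section
/- Let A = [(A_ε)] and B = [(B_ε)] be non-empty internal subsets of G_E. Then [(A_ε ∪ B_ε)] = interl(A ∪ B) = {e_S a + e_{(0,1)∖S} b : a∈A, b∈B, S ⊆ (0,1)}, and this set is the smallest internal subset of G_E containing A ∪ B. -/
open Filter Topology Asymptotics

noncomputable section

namespace ColombeauPaper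

variable {ι κ : Type*} {E : Type*} [AddCommGroup E] [Module ℝ E]
  {F : Type*} [AddCommGroup F] [Module ℝ F]

section UnionAux

variable {E : Type*} [AddCommGroup E] [Module ℝ E] {ι : Type*}

lemma eventually_mem_Ioo : ∀ᶠ ε in 𝓝[>] (0:ℝ), ε ∈ Set.Ioo (0:ℝ) 1 :=
  Ioo_mem_nhdsGT_of_mem ⟨le_refl 0, one_pos⟩

lemma isNegligible_of_eventually_zero (p : ι → Seminorm ℝ E) {v : ℝ → E}
    (h : ∀ᶠ ε in 𝓝[>] (0:ℝ), v ε = 0) : IsNegligible p v := by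
  intro i m
  filter_upwards [h, self_mem_nhdsWithin] with ε h1 h2
  rw [h1, map_zero]
  have : (0:ℝ) < ε := h2
  positivity

lemma eMul_mk (p : ι → Seminorm ℝ E) (S : Set ℝ) (w : moderateGroup p) :
    eMul p S (QuotientAddGroup.mk w) = QuotientAddGroup.mk (eAux p S w) := rfl

lemma coe_eAux (p : ι → Seminorm ℝ E) (S : Set ℝ) (w : moderateGroup p) (ε : ℝ) :
    ((eAux p S w : moderateGroup p) : ℝ → E) ε
      = S.indicator (fun _ => (1 : ℝ)) ε • (w : ℝ → E) ε := rfl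

lemma coe_modSum (p : ι → Seminorm ℝ E) {m : ℕ} (w : Fin m → moderateGroup p) (ε : ℝ) :
    ((∑ j, w j : moderateGroup p) : ℝ → E) ε = ∑ j, (w j : ℝ → E) ε := by
  have : ((∑ j, w j : moderateGroup p) : ℝ → E) = ∑ j, ((w j : ℝ → E)) := by
    exact map_sum (moderateGroup p).subtype w Finset.univ
  rw [this, Finset.sum_apply]

/-- Internal sets are closed under interleaving. -/
lemma interleaving_mem_internal (p : ι → Seminorm ℝ E) (Cnet : ℝ → Set E) {m : ℕ}
    (S : Fin m → Set ℝ) (a : Fin m → Colombeau p)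
    (ha : ∀ j, a j ∈ internalSet p Cnet)
    (hdisj : Pairwise fun j k => Disjoint (S j) (S k))
    (hcover : (⋃ j, S j) = Set.Ioo 0 1) :
    (∑ j, eMul p (S j) (a j)) ∈ internalSet p Cnet := by
  choose w hw hmem using ha
  refine ⟨∑ j, eAux p (S j) (w j), ?_, ?_⟩
  · calc (QuotientAddGroup.mk (∑ j, eAux p (S j) (w j)) : Colombeau p)
        = ∑ j, (QuotientAddGroup.mk (eAux p (S j) (w j)) : Colombeau p) :=
          map_sum (QuotientAddGroup.mk' (negligibleGroup p)) _ _
      _ = ∑ j, eMul p (S j) (a j) := by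
          refine Finset.sum_congr rfl fun j _ => ?_
          rw [← hw j, eMul_mk]
  · have hall : ∀ᶠ ε in 𝓝[>] (0:ℝ), ∀ j, (w j : ℝ → E) ε ∈ Cnet ε :=
      (eventually_all).2 hmem
    filter_upwards [hall, eventually_mem_Ioo] with ε h1 h2
    rw [coe_modSum]
    have hU : ε ∈ ⋃ j, S j := hcover ▸ h2
    obtain ⟨j, hj⟩ := Set.mem_iUnion.1 hU
    have hsum : ∑ k, ((eAux p (S k) (w k) : moderateGroup p) : ℝ → E) ε
        = (w j : ℝ → E) ε := by
      rw [Finset.sum_eq_single j]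
      · rw [coe_eAux, Set.indicator_of_mem hj, one_smul]
      · intro k _ hk
        have hnk : ε ∉ S k := fun hmemk => (hdisj hk).le_bot ⟨hmemk, hj⟩
        rw [coe_eAux, Set.indicator_of_notMem hnk, zero_smul]
      · intro h; exact absurd (Finset.mem_univ j) h
    rw [hsum]
    exact h1 j

/-- Internal sets are closed under binary interleaving. -/
lemma binary_interleaving_mem_internal (p : ι → Seminorm ℝ E) (Cnet : ℝ → Set E)
    {a b : Colombeau p} (ha : a ∈ internalSet p Cnet) (hb : b ∈ internalSet p Cnet)
    {S : Set ℝ} (hS : S ⊆ Set.Ioo 0 1) :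
    eMul p S a + eMul p (Set.Ioo 0 1 \ S) b ∈ internalSet p Cnet := by
  have key := interleaving_mem_internal p Cnet (m := 2) ![S, Set.Ioo 0 1 \ S] ![a, b]
    (by intro j; fin_cases j <;> assumption)
    (by
      intro j k hjk
      fin_cases j <;> fin_cases k <;> simp_all <;>
        first
          | exact disjoint_sdiff_self_right
          | exact disjoint_sdiff_self_left)
    (by
      ext x
      simp only [Set.mem_iUnion, Fin.exists_fin_two]
      show x ∈ S ∨ x ∈ Set.Ioo 0 1 \ S ↔ _
      rw [← Set.mem_union, Set.union_diff_cancel hS])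
  simpa [Fin.sum_univ_two] using key

/-- Decomposition of an element of `[(A_ε ∪ B_ε)]`. -/
lemma mem_union_internal_decomp (p : ι → Seminorm ℝ E) (Anet Bnet : ℝ → Set E)
    (hAne : (internalSet p Anet).Nonempty) (hBne : (internalSet p Bnet).Nonempty)
    {u : Colombeau p} (hu : u ∈ internalSet p (fun ε => Anet ε ∪ Bnet ε)) :
    ∃ a ∈ internalSet p Anet, ∃ b ∈ internalSet p Bnet, ∃ S : Set ℝ,
      S ⊆ Set.Ioo 0 1 ∧ u = eMul p S a + eMul p (Set.Ioo 0 1 \ S) b := by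
  obtain ⟨w, hwmk, hwmem⟩ := hu
  obtain ⟨_, wA, _, hA2⟩ := hAne
  obtain ⟨_, wB, _, hB2⟩ := hBne
  set S : Set ℝ := Set.Ioo 0 1 ∩ {ε | (w : ℝ → E) ε ∈ Anet ε} with hSdef
  set S' : Set ℝ := Set.Ioo 0 1 \ S with hS'def
  set aRep : moderateGroup p := eAux p S w + eAux p Sᶜ wA with haRep
  set bRep : moderateGroup p := eAux p S' w + eAux p S'ᶜ wB with hbRep
  have hcoea : ∀ ε, (aRep : ℝ → E) ε
      = S.indicator (fun _ => (1:ℝ)) ε • (w : ℝ → E) ε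
        + Sᶜ.indicator (fun _ => (1:ℝ)) ε • (wA : ℝ → E) ε := fun ε => rfl
  have hcoeb : ∀ ε, (bRep : ℝ → E) ε
      = S'.indicator (fun _ => (1:ℝ)) ε • (w : ℝ → E) ε
        + S'ᶜ.indicator (fun _ => (1:ℝ)) ε • (wB : ℝ → E) ε := fun ε => rfl
  have haMem : (QuotientAddGroup.mk aRep : Colombeau p) ∈ internalSet p Anet := by
    refine ⟨aRep, rfl, ?_⟩
    filter_upwards [hA2] with ε hε
    rw [hcoea]
    by_cases h : ε ∈ S
    · rw [Set.indicator_of_mem h, Set.indicator_of_notMem (by simpa using h),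
        one_smul, zero_smul, add_zero]
      exact h.2
    · rw [Set.indicator_of_notMem h, Set.indicator_of_mem (by simpa using h),
        one_smul, zero_smul, zero_add]
      exact hε
  have hbMem : (QuotientAddGroup.mk bRep : Colombeau p) ∈ internalSet p Bnet := by
    refine ⟨bRep, rfl, ?_⟩
    filter_upwards [hB2, hwmem] with ε hε hwε
    rw [hcoeb]
    by_cases h : ε ∈ S'
    · rw [Set.indicator_of_mem h, Set.indicator_of_notMem (by simpa using h),
        one_smul, zero_smul, add_zero]
      have hnA : (w : ℝ → E) ε ∉ Anet ε := fun hA => h.2 ⟨h.1, hA⟩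
      exact hwε.resolve_left hnA
    · rw [Set.indicator_of_notMem h, Set.indicator_of_mem (by simpa using h),
        one_smul, zero_smul, zero_add]
      exact hε
  refine ⟨_, haMem, _, hbMem, S, Set.inter_subset_left, ?_⟩
  rw [eMul_mk, eMul_mk, ← hwmk]
  have : (QuotientAddGroup.mk (eAux p S aRep + eAux p S' bRep) : Colombeau p)
      = QuotientAddGroup.mk w := by
    rw [QuotientAddGroup.eq_iff_sub_mem]
    show IsNegligible p _
    apply isNegligible_of_eventually_zero
    filter_upwards [eventually_mem_Ioo] with ε hε
    have hval : (((eAux p S aRep + eAux p S' bRep - w : moderateGroup p)) : ℝ → E) ε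
        = S.indicator (fun _ => (1:ℝ)) ε • (aRep : ℝ → E) ε
          + S'.indicator (fun _ => (1:ℝ)) ε • (bRep : ℝ → E) ε - (w : ℝ → E) ε := rfl
    rw [hval, hcoea, hcoeb]
    by_cases h : ε ∈ S
    · have h' : ε ∉ S' := fun hc => hc.2 h
      have hc : ε ∉ Sᶜ := by simp [h]
      rw [Set.indicator_of_mem h, Set.indicator_of_notMem h',
        Set.indicator_of_notMem hc]
      simp
    · have h' : ε ∈ S' := ⟨hε, h⟩
      have hc : ε ∉ S'ᶜ := by simp [h']
      rw [Set.indicator_of_notMem h, Set.indicator_of_mem h',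
        Set.indicator_of_notMem hc]
      simp
  have hadd : (QuotientAddGroup.mk (eAux p S aRep) : Colombeau p)
      + QuotientAddGroup.mk (eAux p S' bRep)
      = QuotientAddGroup.mk (eAux p S aRep + eAux p S' bRep) := rfl
  rw [hadd]
  exact this.symm

end UnionAux

/-- **Unions of internal sets.** For non-empty internal `A = [(A_ε)]`,
`B = [(B_ε)]`, the set `[(A_ε ∪ B_ε)]` equals `interl(A ∪ B)`, equals
`{e_S a + e_{(0,1)∖S} b : a ∈ A, b ∈ B, S ⊆ (0,1)}`, and is the smallest internal set
containing `A ∪ B`. -/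
theorem union_internalSet
    {E : Type*} [AddCommGroup E] [Module ℝ E] {ι : Type*}
    (p : ι → Seminorm ℝ E) (Anet Bnet : ℝ → Set E)
    (hAne : (internalSet p Anet).Nonempty) (hBne : (internalSet p Bnet).Nonempty) :
    internalSet p (fun ε => Anet ε ∪ Bnet ε)
        = interleaving p (internalSet p Anet ∪ internalSet p Bnet) ∧
    internalSet p (fun ε => Anet ε ∪ Bnet ε)
        = {w : Colombeau p | ∃ a ∈ internalSet p Anet, ∃ b ∈ internalSet p Bnet,
            ∃ S : Set ℝ, S ⊆ Set.Ioo 0 1 ∧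
              w = eMul p S a + eMul p (Set.Ioo 0 1 \ S) b} ∧
    internalSet p Anet ∪ internalSet p Bnet ⊆ internalSet p (fun ε => Anet ε ∪ Bnet ε) ∧
    (∀ C : Set (Colombeau p), IsInternal p C →
      internalSet p Anet ∪ internalSet p Bnet ⊆ C →
      internalSet p (fun ε => Anet ε ∪ Bnet ε) ⊆ C) := by
  -- monotonicity of internal sets under the union
  have hmonoA : internalSet p Anet ⊆ internalSet p (fun ε => Anet ε ∪ Bnet ε) := by
    rintro u ⟨w, hw, hmem⟩
    exact ⟨w, hw, hmem.mono fun ε h => Or.inl h⟩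
  have hmonoB : internalSet p Bnet ⊆ internalSet p (fun ε => Anet ε ∪ Bnet ε) := by
    rintro u ⟨w, hw, hmem⟩
    exact ⟨w, hw, hmem.mono fun ε h => Or.inr h⟩
  have hsub : internalSet p Anet ∪ internalSet p Bnet
      ⊆ internalSet p (fun ε => Anet ε ∪ Bnet ε) := Set.union_subset hmonoA hmonoB
  refine ⟨?_, ?_, hsub, ?_⟩
  · -- equality with the interleaving
    apply Set.Subset.antisymm
    · intro u hu
      obtain ⟨a, ha, b, hb, S, hS, hu'⟩ :=
        mem_union_internal_decomp p Anet Bnet hAne hBne hu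
      refine ⟨2, ![S, Set.Ioo 0 1 \ S], ![a, b], ?_, ?_, ?_, ?_, ?_⟩
      · intro j; fin_cases j
        · exact Or.inl ha
        · exact Or.inr hb
      · intro j; fin_cases j
        · exact hS
        · exact Set.diff_subset
      · intro j k hjk
        fin_cases j <;> fin_cases k <;> simp_all <;>
          first
            | exact disjoint_sdiff_self_right
            | exact disjoint_sdiff_self_left
      · ext x
        simp only [Set.mem_iUnion, Fin.exists_fin_two]
        show x ∈ S ∨ x ∈ Set.Ioo 0 1 \ S ↔ _
        rw [← Set.mem_union, Set.union_diff_cancel hS]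
      · simpa [Fin.sum_univ_two] using hu'
    · rintro u ⟨m, S, a, ha, _, hdisj, hcover, rfl⟩
      exact interleaving_mem_internal p _ S a (fun j => hsub (ha j)) hdisj hcover
  · -- equality with the set of binary interleavings
    apply Set.Subset.antisymm
    · intro u hu
      obtain ⟨a, ha, b, hb, S, hS, hu'⟩ :=
        mem_union_internal_decomp p Anet Bnet hAne hBne hu
      exact ⟨a, ha, b, hb, S, hS, hu'⟩
    · rintro u ⟨a, ha, b, hb, S, hS, rfl⟩
      exact binary_interleaving_mem_internal p _ (hmonoA ha) (hmonoB hb) hS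
  · -- minimality
    rintro C ⟨Cnet, rfl⟩ hC u hu
    obtain ⟨a, ha, b, hb, S, hS, rfl⟩ :=
      mem_union_internal_decomp p Anet Bnet hAne hBne hu
    exact binary_interleaving_mem_internal p Cnet
      (hC (Or.inl ha)) (hC (Or.inr hb)) hS

end ColombeauPaper
end
end
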